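/- For every integer n ≥ 2, there exist unique integers a, b, t with t ≥ 2, 1 ≤ a ≤ b ≤ f_t, and n = a·f_t + b·f_{t-1}. -/
import Mathlib

private lemma fibZ_pos (t : ℕ) (h : 1 ≤ t) : (0 : ℤ) < (Nat.fib t : ℤ) := by
  exact_mod_cast Nat.fib_pos.mpr h

private lemma fibZ_cop (s : ℕ) : IsCoprime ((Nat.fib (s + 1) : ℤ)) ((Nat.fib s : ℤ)) :=
  (Nat.isCoprime_iff_coprime.mpr (Nat.fib_coprime_fib_succ s)).symm

private lemma fibZ_rec (s : ℕ) :
    (Nat.fib (s + 2) : ℤ) = (Nat.fib s : ℤ) + (Nat.fib (s + 1) : ℤ) := by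
  exact_mod_cast Nat.fib_add_two

private lemma fibZ_add (m k : ℕ) :
    (Nat.fib (m + k + 1) : ℤ) =
      (Nat.fib m : ℤ) * (Nat.fib k : ℤ) + (Nat.fib (m + 1) : ℤ) * (Nat.fib (k + 1) : ℤ) := by
  exact_mod_cast Nat.fib_add m k

private lemma le_fib_add_two (m : ℕ) : m ≤ Nat.fib (m + 2) := by
  induction m with
  | zero => simp
  | succ k ih =>
      have h1 : 1 ≤ Nat.fib (k + 1) := Nat.fib_pos.mpr (by omega)
      have h2 := Nat.fib_add_two (n := k + 1)
      rw [show k + 1 + 2 = k + 3 by omega, show k + 1 + 1 = k + 2 by omega] at h2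
      rw [show k + 1 + 2 = k + 3 by omega]
      omega

/-- same-level uniqueness -/
private lemma same_level (n : ℤ) (s : ℕ) (a b a' b' : ℤ)
    (hb1 : 1 ≤ b) (hbF : b ≤ (Nat.fib (s + 2) : ℤ))
    (hb1' : 1 ≤ b') (hbF' : b' ≤ (Nat.fib (s + 2) : ℤ))
    (h : n = a * (Nat.fib (s + 2) : ℤ) + b * (Nat.fib (s + 1) : ℤ))
    (h' : n = a' * (Nat.fib (s + 2) : ℤ) + b' * (Nat.fib (s + 1) : ℤ)) :
    a' = a ∧ b' = b := by
  set F2 : ℤ := (Nat.fib (s + 2) : ℤ) with hF2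
  set F1 : ℤ := (Nat.fib (s + 1) : ℤ) with hF1
  have hF2pos : 0 < F2 := fibZ_pos _ (by omega)
  have key : (b' - b) * F1 = F2 * (a - a') := by linarith [h, h']
  have hdvd : F2 ∣ (b' - b) := (fibZ_cop (s + 1)).dvd_of_dvd_mul_right ⟨a - a', key⟩
  obtain ⟨m, hm⟩ := hdvd
  have hm0 : m = 0 := by
    rcases lt_trichotomy m 0 with h1 | h1 | h1
    · exfalso
      have hm1 : m ≤ -1 := by omega
      have : F2 * m ≤ F2 * (-1) := by
        exact mul_le_mul_of_nonneg_left hm1 hF2pos.le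
      linarith
    · exact h1
    · exfalso
      have hm1 : 1 ≤ m := h1
      have : F2 * 1 ≤ F2 * m := mul_le_mul_of_nonneg_left hm1 hF2pos.le
      linarith
  have hbb : b' = b := by rw [hm0, mul_zero] at hm; linarith
  refine ⟨?_, hbb⟩
  have h0 : F2 * (a - a') = 0 := by rw [← key, hbb]; ring
  rcases mul_eq_zero.mp h0 with h1 | h1
  · exact absurd h1 (by positivity)
  · linarith

set_option maxHeartbeats 1000000 in
/-- cross-level impossibility: representation at level s+2 and at level s+j+3 -/
private lemma cross_level (n : ℤ) (s j : ℕ) (a b A B : ℤ)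
    (hab : a ≤ b) (hbF : b ≤ (Nat.fib (s + 2) : ℤ))
    (h : n = a * (Nat.fib (s + 2) : ℤ) + b * (Nat.fib (s + 1) : ℤ))
    (hA1 : 1 ≤ A) (hAB : A ≤ B)
    (h' : n = A * (Nat.fib (s + j + 3) : ℤ) + B * (Nat.fib (s + j + 2) : ℤ)) : False := by
  set F2 : ℤ := (Nat.fib (s + 2) : ℤ) with hF2
  set F1 : ℤ := (Nat.fib (s + 1) : ℤ) with hF1
  have hF2pos : 0 < F2 := fibZ_pos _ (by omega)
  have hF1pos : 0 < F1 := fibZ_pos _ (by omega)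
  set Bv : ℤ := A * (Nat.fib (j + 1) : ℤ) + B * (Nat.fib j : ℤ) with hBv
  set Cv : ℤ := A * (Nat.fib (j + 2) : ℤ) + B * (Nat.fib (j + 1) : ℤ) with hCv
  have hB1 : 1 ≤ B := le_trans hA1 hAB
  have hfj1 : (1 : ℤ) ≤ (Nat.fib (j + 1) : ℤ) := fibZ_pos _ (by omega)
  have hfj0 : (0 : ℤ) ≤ (Nat.fib j : ℤ) := by positivity
  -- n = Cv * F2 + Bv * F1
  have e1 : (Nat.fib (s + j + 3) : ℤ) =
      (Nat.fib j : ℤ) * F2 + (Nat.fib (j + 1) : ℤ) * ((Nat.fib (s + 3) : ℤ)) := by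
    have h0 := fibZ_add j (s + 2)
    rw [show j + (s + 2) + 1 = s + j + 3 by omega, show s + 2 + 1 = s + 3 by omega] at h0
    exact h0
  have e2 : (Nat.fib (s + j + 2) : ℤ) =
      (Nat.fib j : ℤ) * F1 + (Nat.fib (j + 1) : ℤ) * F2 := by
    have h0 := fibZ_add j (s + 1)
    rw [show j + (s + 1) + 1 = s + j + 2 by omega, show s + 1 + 1 = s + 2 by omega] at h0
    exact h0
  have e3 : (Nat.fib (s + 3) : ℤ) = F1 + F2 := by
    have h0 := fibZ_rec (s + 1)
    rw [show s + 1 + 2 = s + 3 by omega, show s + 1 + 1 = s + 2 by omega] at h0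
    linarith
  have e4 : (Nat.fib (j + 2) : ℤ) = (Nat.fib j : ℤ) + (Nat.fib (j + 1) : ℤ) := fibZ_rec j
  have hkey : n = Cv * F2 + Bv * F1 := by
    rw [h', e1, e2, e3, hCv, hBv, e4]; ring
  have key : (b - Bv) * F1 = F2 * (Cv - a) := by linarith [h, hkey]
  have hdvd : F2 ∣ (b - Bv) := (fibZ_cop (s + 1)).dvd_of_dvd_mul_right ⟨Cv - a, key⟩
  obtain ⟨m, hm⟩ := hdvd
  have p1 : (1 : ℤ) * 1 ≤ A * (Nat.fib (j + 1) : ℤ) :=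
    mul_le_mul hA1 hfj1 zero_le_one (by linarith)
  have p2 : (0 : ℤ) ≤ B * (Nat.fib j : ℤ) := mul_nonneg (by linarith) hfj0
  have hBv1 : 1 ≤ Bv := by rw [hBv]; linarith
  have hCBgt : Bv < Cv := by
    have hCB : Cv - Bv = A * (Nat.fib j : ℤ) + B * ((Nat.fib (j + 1) : ℤ) - (Nat.fib j : ℤ)) := by
      rw [hCv, hBv, e4]; ring
    have hmono : (Nat.fib j : ℤ) ≤ (Nat.fib (j + 1) : ℤ) := by
      exact_mod_cast Nat.fib_mono (Nat.le_succ j)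
    rcases Nat.eq_zero_or_pos j with hj | hj
    · rw [hj] at hCB
      norm_num at hCB
      linarith
    · have hfj : (1 : ℤ) ≤ (Nat.fib j : ℤ) := fibZ_pos _ hj
      have q1 : (1 : ℤ) * 1 ≤ A * (Nat.fib j : ℤ) :=
        mul_le_mul hA1 hfj zero_le_one (by linarith)
      have q2 : (0 : ℤ) ≤ B * ((Nat.fib (j + 1) : ℤ) - (Nat.fib j : ℤ)) :=
        mul_nonneg (by linarith) (by linarith)
      linarith
  have hm0 : m ≤ 0 := by
    by_contra hc
    push_neg at hc
    have hm1 : 1 ≤ m := hc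
    have : F2 * 1 ≤ F2 * m := mul_le_mul_of_nonneg_left hm1 hF2pos.le
    linarith
  have hCa : Cv - a = m * F1 := by
    have h2 : F2 * (Cv - a) = F2 * (m * F1) := by rw [← key, hm]; ring
    exact mul_left_cancel₀ (ne_of_gt hF2pos) h2
  have hmF1 : m * F1 ≤ 0 := by
    have := mul_nonneg (neg_nonneg.mpr hm0) hF1pos.le
    nlinarith
  have hmF2 : F2 * m ≤ 0 := by
    have := mul_nonneg (neg_nonneg.mpr hm0) hF2pos.le
    nlinarith
  -- Cv ≤ a ≤ b ≤ Bv < Cv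
  linarith

set_option maxHeartbeats 1000000 in
theorem stmt7 (n : ℤ) (hn : 2 ≤ n) :
    ∃ a b : ℤ, ∃ t : ℕ, (2 ≤ t ∧ 1 ≤ a ∧ a ≤ b ∧ b ≤ (Nat.fib t : ℤ) ∧
        n = a * (Nat.fib t : ℤ) + b * (Nat.fib (t - 1) : ℤ)) ∧
      ∀ a' b' : ℤ, ∀ t' : ℕ, (2 ≤ t' ∧ 1 ≤ a' ∧ a' ≤ b' ∧ b' ≤ (Nat.fib t' : ℤ) ∧
          n = a' * (Nat.fib t' : ℤ) + b' * (Nat.fib (t' - 1) : ℤ)) →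
        a' = a ∧ b' = b ∧ t' = t := by
  classical
  have hEx : ∃ t : ℕ, 2 ≤ t ∧ ∃ a b : ℤ,
      n = a * (Nat.fib t : ℤ) + b * (Nat.fib (t - 1) : ℤ) ∧
        1 ≤ b ∧ b ≤ (Nat.fib t : ℤ) ∧ a ≤ b := by
    obtain ⟨u, v, huv⟩ := fibZ_cop (n.toNat + 4)
    set s : ℕ := n.toNat + 3 with hs
    set F2 : ℤ := (Nat.fib (s + 2) : ℤ) with hF2
    set F1 : ℤ := (Nat.fib (s + 1) : ℤ) with hF1
    have hF2pos : 0 < F2 := fibZ_pos _ (by omega)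
    have hF1pos : 0 < F1 := fibZ_pos _ (by omega)
    have huv' : u * F2 + v * F1 = 1 := by
      rw [hF2, hF1, hs]
      rw [show n.toNat + 3 + 2 = n.toNat + 4 + 1 by omega,
        show n.toNat + 3 + 1 = n.toNat + 4 by omega]
      exact huv
    set b : ℤ := (n * v - 1) % F2 + 1 with hb
    have hb1 : 1 ≤ b := by
      have := Int.emod_nonneg (n * v - 1) (ne_of_gt hF2pos)
      omega
    have hb2 : b ≤ F2 := by
      have := Int.emod_lt_of_pos (n * v - 1) hF2pos
      omega
    have hdvd1 : F2 ∣ (n * v - b) := by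
      refine ⟨(n * v - 1) / F2, ?_⟩
      have := Int.emod_def (n * v - 1) F2
      rw [hb]
      linarith
    have hdvd : F2 ∣ (n - b * F1) := by
      have h2 : n - b * F1 = F2 * (n * u) + (n * v - b) * F1 := by
        linear_combination (-n) * huv'
      rw [h2]
      exact dvd_add (dvd_mul_right F2 (n * u)) (hdvd1.mul_right F1)
    obtain ⟨a, ha⟩ := hdvd
    have heq : n = a * F2 + b * F1 := by linarith
    have hnF1 : n < F1 := by
      have h1 : (n.toNat + 2 : ℕ) ≤ Nat.fib (n.toNat + 4) := le_fib_add_two (n.toNat + 2)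
      have h3 : (n.toNat : ℤ) = n := Int.toNat_of_nonneg (by omega)
      have h4 : ((n.toNat + 2 : ℕ) : ℤ) ≤ ((Nat.fib (n.toNat + 4) : ℕ) : ℤ) := by exact_mod_cast h1
      rw [hF1, hs, show n.toNat + 3 + 1 = n.toNat + 4 by omega]
      push_cast at h4
      omega
    have hbF1 : F1 ≤ b * F1 := le_mul_of_one_le_left hF1pos.le hb1
    have haneg : a < 0 := by
      by_contra hc
      push_neg at hc
      have : 0 ≤ F2 * a := mul_nonneg hF2pos.le hc
      linarith
    refine ⟨s + 2, by omega, a, b, ?_, hb1, hb2, by linarith⟩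
    have hred : (s + 2) - 1 = s + 1 := rfl
    rw [hred]
    exact heq
  have hPT := Nat.find_spec hEx
  have hmin : ∀ t, t < Nat.find hEx → ¬ (2 ≤ t ∧ ∃ a b : ℤ,
      n = a * (Nat.fib t : ℤ) + b * (Nat.fib (t - 1) : ℤ) ∧
        1 ≤ b ∧ b ≤ (Nat.fib t : ℤ) ∧ a ≤ b) := fun t ht => Nat.find_min hEx ht
  set T : ℕ := Nat.find hEx with hT
  obtain ⟨hT2, a, b, heq, hb1, hbF, hab⟩ := hPT
  -- a ≥ 1
  have ha1 : 1 ≤ a := by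
    by_contra hc
    push_neg at hc
    have ha0 : a ≤ 0 := by omega
    rcases Nat.lt_or_ge T 3 with hT3 | hT3
    · -- T = 2 : n = a + b ≤ 1 < 2
      have hT2' : T = 2 := by omega
      rw [hT2'] at heq hbF
      norm_num [Nat.fib] at heq hbF
      omega
    · -- T = s + 3, build witness at level s + 2
      obtain ⟨s, e⟩ : ∃ s, T = s + 3 := ⟨T - 3, by omega⟩
      rw [e] at heq hbF
      set F3 : ℤ := (Nat.fib (s + 3) : ℤ) with hF3
      set F2 : ℤ := (Nat.fib (s + 2) : ℤ) with hF2
      set F1 : ℤ := (Nat.fib (s + 1) : ℤ) with hF1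
      have hF2pos : 0 < F2 := fibZ_pos _ (by omega)
      have hF1pos : 0 < F1 := fibZ_pos _ (by omega)
      have heq' : n = a * F3 + b * F2 := by
        have hred : (s + 3) - 1 = s + 2 := rfl
        rw [hred] at heq
        exact heq
      have hrec : F3 = F1 + F2 := by
        have h0 := fibZ_rec (s + 1)
        rw [show s + 1 + 2 = s + 3 by omega, show s + 1 + 1 = s + 2 by omega] at h0
        linarith
      set y : ℤ := (a - 1) % F2 + 1 with hy
      have hy1 : 1 ≤ y := by
        have := Int.emod_nonneg (a - 1) (ne_of_gt hF2pos)
        omega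
      have hy2 : y ≤ F2 := by
        have := Int.emod_lt_of_pos (a - 1) hF2pos
        omega
      obtain ⟨m, hm⟩ : F2 ∣ (a - y) := by
        refine ⟨(a - 1) / F2, ?_⟩
        have := Int.emod_def (a - 1) F2
        rw [hy]
        linarith
      have hmneg : m ≤ -1 := by
        by_contra hc2
        push_neg at hc2
        have hm0 : 0 ≤ m := by omega
        have : 0 ≤ F2 * m := mul_nonneg hF2pos.le hm0
        linarith
      set x : ℤ := a + b + m * F1 with hx
      have heqx : n = x * F2 + y * F1 := by
        have hay : a = y + F2 * m := by linarith
        rw [heq', hrec, hx, hay]; ring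
      have hxy : x ≤ y := by
        have hd : x - y = b + m * F3 := by
          rw [hx, hrec]; linarith
        have hmF3 : m * F3 ≤ (-1) * F3 := by
          apply mul_le_mul_of_nonneg_right hmneg
          rw [hrec]; linarith
        have hbF3 : b ≤ F3 := hbF
        linarith
      exact hmin (s + 2) (by omega) ⟨by omega, x, y, by
        have hred : (s + 2) - 1 = s + 1 := rfl
        rw [hred]; exact heqx, hy1, hy2, hxy⟩
  refine ⟨a, b, T, ⟨hT2, ha1, hab, hbF, heq⟩, ?_⟩
  rintro a' b' t' ⟨ht'2, ha1', hab', hbF', heq'⟩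
  rcases lt_trichotomy t' T with hlt | heqt | hgt
  · -- t' < T : cross contradiction, lower level t'
    exfalso
    obtain ⟨s, j, e1, e2⟩ : ∃ s j, t' = s + 2 ∧ T = s + j + 3 :=
      ⟨t' - 2, T - t' - 1, by omega, by omega⟩
    rw [e1] at heq' hbF'
    rw [e2] at heq
    have h1 : (s + 2) - 1 = s + 1 := rfl
    rw [h1] at heq'
    have h2 : (s + j + 3) - 1 = s + j + 2 := rfl
    rw [h2] at heq
    exact cross_level n s j a' b' a b hab' hbF' heq' ha1 hab heq
  · -- same level
    rw [heqt] at heq' hbF'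
    obtain ⟨s, e⟩ : ∃ s, T = s + 2 := ⟨T - 2, by omega⟩
    rw [e] at heq heq' hbF hbF'
    have h1 : (s + 2) - 1 = s + 1 := rfl
    rw [h1] at heq heq'
    have hb1' : (1 : ℤ) ≤ b' := le_trans ha1' hab'
    obtain ⟨h3, h4⟩ := same_level n s a b a' b' hb1 hbF hb1' hbF' heq heq'
    exact ⟨h3, h4, heqt⟩
  · -- T < t'
    exfalso
    obtain ⟨s, j, e1, e2⟩ : ∃ s j, T = s + 2 ∧ t' = s + j + 3 :=
      ⟨T - 2, t' - T - 1, by omega, by omega⟩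
    rw [e1] at heq hbF
    rw [e2] at heq'
    have h1 : (s + 2) - 1 = s + 1 := rfl
    rw [h1] at heq
    have h2 : (s + j + 3) - 1 = s + j + 2 := rfl
    rw [h2] at heq'
    exact cross_level n s j a b a' b' hab hbF heq ha1' hab' heq'
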